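/- Let C ⊆ V be independent in G and ∅ ≠ W ⊆ V∖C. The uniform distribution e_C^W on N_C(W) ∪ W is a vertex of M(G,C) if and only if for any distinct x, y ∈ W there is a path x = x_0 ∼ x_1 ∼ … ∼ x_r = y in G with x_0, x_2, … ∈ W and x_1, x_3, … ∈ N_C(W). -/

import Mathlib

/-- The polytope of `C`-modes of a graph `G`, inside the probability simplex. -/
def modePolytope {V : Type*} [Fintype V] (G : SimpleGraph V) (C : Set V) :
    Set (V → ℝ) :=
  {p | (∀ v, 0 ≤ p v) ∧ (∑ v, p v = 1) ∧ ∀ x ∈ C, ∀ y, G.Adj x y → p y ≤ p x}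

/-- The uniform probability distribution on a finite subset. -/
noncomputable def uniformOn {V : Type*} [DecidableEq V] (s : Finset V) : V → ℝ :=
  fun v => if v ∈ s then (s.card : ℝ)⁻¹ else 0

/-- `N_C(W)`: the elements of `C` adjacent to some element of `W`. -/
def modeNbrs {V : Type*} [DecidableEq V] (G : SimpleGraph V) [DecidableRel G.Adj]
    (C W : Finset V) : Finset V :=
  C.filter fun y => ∃ w ∈ W, G.Adj y w

/-- For an independent set `C` and a nonempty `W ⊆ V∖C`, the uniform distribution
`e_C^W` on `N_C(W) ∪ W` is a vertex (extreme point) of `M(G,C)` if and only if every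
two distinct elements of `W` are joined by an alternating path, i.e.\ a path in `G`
whose even-indexed vertices lie in `W` and odd-indexed vertices lie in `N_C(W)`. -/
theorem uniform_extremePoint_iff_alternating_path {V : Type*} [Fintype V]
    [DecidableEq V] (G : SimpleGraph V) [DecidableRel G.Adj] (C W : Finset V)
    (hInd : ∀ x ∈ C, ∀ y ∈ C, ¬ G.Adj x y)
    (hW : W.Nonempty) (hWC : ∀ w ∈ W, w ∉ C) :
    uniformOn (modeNbrs G C W ∪ W) ∈ (modePolytope G ↑C).extremePoints ℝ ↔
      ∀ x ∈ W, ∀ y ∈ W, x ≠ y →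
        ∃ (r : ℕ) (f : ℕ → V), f 0 = x ∧ f r = y ∧
          (∀ i < r, G.Adj (f i) (f (i + 1))) ∧
          (∀ i ≤ r, (Even i → f i ∈ W) ∧ (¬ Even i → f i ∈ modeNbrs G C W)) := by
  classical
  set S : Finset V := modeNbrs G C W ∪ W with hSdef
  have hNC : ∀ v ∈ modeNbrs G C W, v ∈ C := fun v hv => (Finset.mem_filter.1 hv).1
  obtain ⟨w₀, hw₀⟩ := hW
  have hScard : 0 < S.card := Finset.card_pos.2 ⟨w₀, Finset.mem_union_right _ hw₀⟩
  set n : ℝ := (S.card : ℝ) with hndef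
  have hn0 : n ≠ 0 := Nat.cast_ne_zero.2 hScard.ne'
  have hnpos : 0 < n := Nat.cast_pos.2 hScard
  have hninv : 0 < n⁻¹ := inv_pos.2 hnpos
  -- neighbors of non-modeNbrs elements of C are outside S
  have hout : ∀ c ∈ C, c ∉ modeNbrs G C W → ∀ y, G.Adj c y → y ∉ S := by
    intro c hc hcN y hadj hyS
    rcases Finset.mem_union.1 hyS with hyN | hyW
    · exact hInd c hc y (hNC y hyN) hadj
    · exact hcN (Finset.mem_filter.2 ⟨hc, y, hyW, hadj⟩)
  -- uniform values
  have hpval : ∀ v ∈ S, uniformOn S v = n⁻¹ := fun v hv => if_pos hv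
  have hpval' : ∀ v, v ∉ S → uniformOn S v = 0 := fun v hv => if_neg hv
  -- p is in the polytope
  have hpsum : ∑ v, uniformOn S v = 1 := by
    unfold uniformOn
    rw [Finset.sum_ite_mem, Finset.univ_inter, Finset.sum_const, nsmul_eq_mul,
      mul_inv_cancel₀ hn0]
  have hpM : uniformOn S ∈ modePolytope G ↑C := by
    refine ⟨fun v => ?_, hpsum, ?_⟩
    · unfold uniformOn; split
      · exact hninv.le
      · exact le_refl 0
    · intro c hc y hadj
      by_cases hcN : c ∈ modeNbrs G C W
      · rw [hpval c (Finset.mem_union_left _ hcN)]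
        unfold uniformOn; split
        · exact le_refl _
        · exact hninv.le
      · rw [hpval' y (hout c hc hcN y hadj)]
        unfold uniformOn; split
        · exact hninv.le
        · exact le_refl 0
  constructor
  · -- extreme ⇒ connectivity
    intro hext x hx y hy hxy
    by_contra hpath
    set Reach : V → Prop := fun v => ∃ (k : ℕ) (f : ℕ → V), f 0 = x ∧ f k = v ∧
        (∀ i < k, G.Adj (f i) (f (i + 1))) ∧
        (∀ i ≤ k, (Even i → f i ∈ W) ∧ (¬ Even i → f i ∈ modeNbrs G C W)) with hReach
    set A : Finset V := S.filter Reach with hAdef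
    have hAS : A ⊆ S := Finset.filter_subset _ _
    have hxA : x ∈ A := by
      refine Finset.mem_filter.2 ⟨Finset.mem_union_right _ hx, 0, fun _ => x, rfl, rfl,
        fun i h => absurd h (Nat.not_lt_zero i), fun i hi => ?_⟩
      rw [Nat.le_zero.1 hi]
      exact ⟨fun _ => hx, fun h => absurd Even.zero h⟩
    have hyA : y ∉ A := fun h => hpath ((Finset.mem_filter.1 h).2)
    have hyB : y ∈ S \ A := Finset.mem_sdiff.2 ⟨Finset.mem_union_right _ hy, hyA⟩
    -- closure of A under alternating edges
    have hclos : ∀ c ∈ modeNbrs G C W, ∀ w ∈ W, G.Adj c w → (c ∈ A ↔ w ∈ A) := by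
      intro c hc w hw hadj
      constructor
      · intro hcA
        obtain ⟨k, f, hf0, hfk, hadjf, haltf⟩ := (Finset.mem_filter.1 hcA).2
        have hkodd : ¬ Even k := by
          intro he
          exact hWC c (hfk ▸ (haltf k le_rfl).1 he) (hNC c hc)
        refine Finset.mem_filter.2 ⟨Finset.mem_union_right _ hw,
          k + 1, fun i => if i = k + 1 then w else f i, ?_, ?_, ?_, ?_⟩
        · simp [hf0]
        · simp
        · intro i hi
          rcases Nat.lt_succ_iff_lt_or_eq.1 hi with hik | hik
          · have h1 : i ≠ k + 1 := by omega
            have h2 : i + 1 ≠ k + 1 := by omega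
            simpa [h1, h2, show i ≠ k by omega] using hadjf i hik
          · subst hik
            have h1 : i ≠ i + 1 := by omega
            simpa [h1, hfk] using hadj
        · intro i hi
          by_cases hik : i = k + 1
          · subst hik
            simp only [if_pos rfl]
            have he : Even (k + 1) := Nat.even_add_one.2 hkodd
            exact ⟨fun _ => hw, fun h => absurd he h⟩
          · simp only [if_neg hik]
            exact haltf i (by omega)
      · intro hwA
        obtain ⟨k, f, hf0, hfk, hadjf, haltf⟩ := (Finset.mem_filter.1 hwA).2
        have hkeven : Even k := by
          by_contra he
          exact hWC w hw (hNC w (hfk ▸ (haltf k le_rfl).2 he))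
        refine Finset.mem_filter.2 ⟨Finset.mem_union_left _ hc,
          k + 1, fun i => if i = k + 1 then c else f i, ?_, ?_, ?_, ?_⟩
        · simp [hf0]
        · simp
        · intro i hi
          rcases Nat.lt_succ_iff_lt_or_eq.1 hi with hik | hik
          · have h1 : i ≠ k + 1 := by omega
            have h2 : i + 1 ≠ k + 1 := by omega
            simpa [h1, h2, show i ≠ k by omega] using hadjf i hik
          · subst hik
            have h1 : i ≠ i + 1 := by omega
            simpa [h1, hfk] using hadj.symm
        · intro i hi
          by_cases hik : i = k + 1
          · subst hik
            simp only [if_pos rfl]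
            have hne : ¬ Even (k + 1) := by simp [Nat.even_add_one, hkeven]
            exact ⟨fun h => absurd h hne, fun _ => hc⟩
          · simp only [if_neg hik]
            exact haltf i (by omega)
    -- now build a perturbation
    set B : Finset V := S \ A with hBdef
    have hBS : B ⊆ S := Finset.sdiff_subset
    set cA : ℝ := (A.card : ℝ) with hcAdef
    set cB : ℝ := (B.card : ℝ) with hcBdef
    have hcApos : 0 < cA := by
      have h : 0 < A.card := Finset.card_pos.2 ⟨x, hxA⟩
      rw [hcAdef]; exact_mod_cast h
    have hcBpos : 0 < cB := by
      have h : 0 < B.card := Finset.card_pos.2 ⟨y, hyB⟩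
      rw [hcBdef]; exact_mod_cast h
    have hcard : cA + cB = n := by
      have := Finset.card_sdiff_add_card_eq_card hAS
      rw [hcAdef, hcBdef, hndef]
      push_cast [← this]
      ring
    have hcAle : cA ≤ n := by linarith
    have hcBle : cB ≤ n := by linarith
    set ε : ℝ := n⁻¹ * n⁻¹ with hεdef
    have hεpos : 0 < ε := mul_pos hninv hninv
    have hbound : ∀ t : ℝ, 0 < t → t ≤ n → 0 ≤ n⁻¹ + -(t * ε) := by
      intro t ht htn
      have h1 : t * ε ≤ n * ε := mul_le_mul_of_nonneg_right htn hεpos.le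
      have h2 : n * ε = n⁻¹ := by
        rw [hεdef, ← mul_assoc, mul_inv_cancel₀ hn0, one_mul]
      linarith
    set F : ℝ → ℝ → (V → ℝ) :=
      fun dA dB v => if v ∈ A then n⁻¹ + dA else if v ∈ S then n⁻¹ + dB else 0 with hFdef
    have hFnonneg : ∀ dA dB : ℝ, 0 ≤ n⁻¹ + dA → 0 ≤ n⁻¹ + dB → ∀ v, 0 ≤ F dA dB v := by
      intro dA dB h1 h2 v
      simp only [hFdef]
      split_ifs
      · exact h1
      · exact h2
      · exact le_refl 0
    have hmem : ∀ dA dB : ℝ, 0 ≤ n⁻¹ + dA → 0 ≤ n⁻¹ + dB → cA * dA + cB * dB = 0 →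
        F dA dB ∈ modePolytope G ↑C := by
      intro dA dB h1 h2 h3
      refine ⟨hFnonneg dA dB h1 h2, ?_, ?_⟩
      · have hzero : ∀ v ∈ Finset.univ, v ∉ S → F dA dB v = 0 := by
          intro v _ hv
          simp only [hFdef]
          rw [if_neg (fun h => hv (hAS h)), if_neg hv]
        rw [← Finset.sum_subset (Finset.subset_univ S) hzero, ← Finset.sum_sdiff hAS]
        have e1 : ∑ v ∈ S \ A, F dA dB v = cB * (n⁻¹ + dB) := by
          rw [Finset.sum_congr rfl (fun v hv => ?_), Finset.sum_const, nsmul_eq_mul]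
          simp only [hFdef]
          rw [if_neg (Finset.mem_sdiff.1 hv).2, if_pos (Finset.mem_sdiff.1 hv).1]
        have e2 : ∑ v ∈ A, F dA dB v = cA * (n⁻¹ + dA) := by
          rw [Finset.sum_congr rfl (fun v hv => ?_), Finset.sum_const, nsmul_eq_mul]
          simp only [hFdef]
          rw [if_pos hv]
        rw [e1, e2]
        linear_combination h3 + n⁻¹ * hcard + mul_inv_cancel₀ hn0
      · intro c hc z hadj
        by_cases hcN : c ∈ modeNbrs G C W
        · have hcS : c ∈ S := Finset.mem_union_left _ hcN
          by_cases hzS : z ∈ S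
          · rcases Finset.mem_union.1 hzS with hzN | hzW
            · exact absurd hadj (hInd c hc z (hNC z hzN))
            · have hiff := hclos c hcN z hzW hadj
              simp only [hFdef]
              by_cases hcA : c ∈ A
              · rw [if_pos hcA, if_pos (hiff.1 hcA)]
              · rw [if_neg hcA, if_neg (fun h => hcA (hiff.2 h)), if_pos hzS, if_pos hcS]
          · have hz0 : F dA dB z = 0 := by
              simp only [hFdef]
              rw [if_neg (fun h => hzS (hAS h)), if_neg hzS]
            rw [hz0]
            exact hFnonneg dA dB h1 h2 c
        · have hzS : z ∉ S := hout c hc hcN z hadj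
          have hcS : c ∉ S := by
            intro h
            rcases Finset.mem_union.1 h with h' | h'
            · exact hcN h'
            · exact hWC c h' hc
          have hz0 : F dA dB z = 0 := by
            simp only [hFdef]
            rw [if_neg (fun h => hzS (hAS h)), if_neg hzS]
          have hc0 : F dA dB c = 0 := by
            simp only [hFdef]
            rw [if_neg (fun h => hcS (hAS h)), if_neg hcS]
          rw [hz0, hc0]
    have hq₁M : F (cB * ε) (-(cA * ε)) ∈ modePolytope G ↑C := by
      refine hmem _ _ (by nlinarith [mul_pos hcBpos hεpos]) (hbound cA hcApos hcAle) (by ring)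
    have hq₂M : F (-(cB * ε)) (cA * ε) ∈ modePolytope G ↑C := by
      refine hmem _ _ (hbound cB hcBpos hcBle) (by nlinarith [mul_pos hcApos hεpos]) (by ring)
    have hcomb : (1/2 : ℝ) • F (cB * ε) (-(cA * ε)) + (1/2 : ℝ) • F (-(cB * ε)) (cA * ε)
        = uniformOn S := by
      funext v
      simp only [Pi.add_apply, Pi.smul_apply, smul_eq_mul, hFdef, uniformOn]
      by_cases hvA : v ∈ A
      · rw [if_pos hvA, if_pos hvA, if_pos (hAS hvA)]
        ring
      · rw [if_neg hvA, if_neg hvA]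
        by_cases hvS : v ∈ S
        · rw [if_pos hvS, if_pos hvS, if_pos hvS]
          ring
        · rw [if_neg hvS, if_neg hvS, if_neg hvS]
          ring
    have hseg : uniformOn S ∈ openSegment ℝ (F (cB * ε) (-(cA * ε))) (F (-(cB * ε)) (cA * ε)) :=
      ⟨1/2, 1/2, by norm_num, by norm_num, by norm_num, hcomb⟩
    have heq := hext.2 hq₁M hq₂M hseg
    have hx' := congrFun heq x
    simp only [hFdef] at hx'
    rw [if_pos hxA, hpval x (Finset.mem_union_right _ hx)] at hx'
    nlinarith [mul_pos hcBpos hεpos]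
  · -- connectivity ⇒ extreme
    intro hconn
    refine ⟨hpM, ?_⟩
    intro q hq r hr hseg
    obtain ⟨a, b, ha, hb, hab, habq⟩ := hseg
    -- edge equality
    have key : ∀ q₁ q₂ : V → ℝ, ∀ a b : ℝ, 0 < a → 0 < b →
        q₁ ∈ modePolytope G ↑C → q₂ ∈ modePolytope G ↑C →
        a • q₁ + b • q₂ = uniformOn S →
        ∀ c ∈ modeNbrs G C W, ∀ w ∈ W, G.Adj c w → q₁ w = q₁ c := by
      intro q₁ q₂ a b ha hb hq₁ hq₂ heq c hc w hw hadj
      have h1 : q₁ w ≤ q₁ c := hq₁.2.2 c (hNC c hc) w hadj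
      have h2 : q₂ w ≤ q₂ c := hq₂.2.2 c (hNC c hc) w hadj
      have hw' : a * q₁ w + b * q₂ w = n⁻¹ := by
        have := congrFun heq w
        simpa [hpval w (Finset.mem_union_right _ hw)] using this
      have hc' : a * q₁ c + b * q₂ c = n⁻¹ := by
        have := congrFun heq c
        simpa [hpval c (Finset.mem_union_left _ hc)] using this
      have h3 : a * q₁ w ≤ a * q₁ c := by nlinarith
      have h4 : b * q₂ w ≤ b * q₂ c := by nlinarith
      have h5 : a * q₁ w = a * q₁ c := by linarith
      exact mul_left_cancel₀ ha.ne' h5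
    -- zero outside S
    have hsupp : ∀ v, v ∉ S → q v = 0 ∧ r v = 0 := by
      intro v hv
      have h0 : a * q v + b * r v = 0 := by
        have := congrFun habq v
        simpa [hpval' v hv] using this
      have hq0 := hq.1 v
      have hr0 := hr.1 v
      constructor <;> nlinarith
    -- a generic argument
    have toUniform : ∀ q₁ : V → ℝ, q₁ ∈ modePolytope G ↑C → (∀ v, v ∉ S → q₁ v = 0) →
        (∀ c ∈ modeNbrs G C W, ∀ w ∈ W, G.Adj c w → q₁ w = q₁ c) → q₁ = uniformOn S := by
      intro q₁ hq₁ hs₁ hkey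
      have hpathconst : ∀ (k : ℕ) (f : ℕ → V), (∀ i < k, G.Adj (f i) (f (i + 1))) →
          (∀ i ≤ k, (Even i → f i ∈ W) ∧ (¬ Even i → f i ∈ modeNbrs G C W)) →
          ∀ i ≤ k, q₁ (f i) = q₁ (f 0) := by
        intro k f hadj halt i
        induction i with
        | zero => intro _; rfl
        | succ m ih =>
          intro hm
          have hm' : m ≤ k := Nat.le_of_succ_le hm
          have hadjm := hadj m hm
          rcases Nat.even_or_odd m with he | ho
          · have hwm : f m ∈ W := (halt m hm').1 he
            have hcm : f (m + 1) ∈ modeNbrs G C W :=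
              (halt (m + 1) hm).2 (by simp [Nat.even_add_one, he])
            have := hkey (f (m + 1)) hcm (f m) hwm hadjm.symm
            rw [← this]; exact ih hm'
          · have hcm : f m ∈ modeNbrs G C W := (halt m hm').2 (Nat.not_even_iff_odd.2 ho)
            have hwm : f (m + 1) ∈ W := (halt (m + 1) hm).1 (ho.add_one)
            have := hkey (f m) hcm (f (m + 1)) hwm hadjm
            rw [this]; exact ih hm'
      have hWconst : ∀ v ∈ W, q₁ v = q₁ w₀ := by
        intro v hv
        by_cases hvw : v = w₀
        · rw [hvw]
        · obtain ⟨k, f, hf0, hfk, hadjf, haltf⟩ := hconn v hv w₀ hw₀ hvw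
          have := hpathconst k f hadjf haltf k le_rfl
          rw [hf0, hfk] at this
          exact this.symm
      have hSconst : ∀ v ∈ S, q₁ v = q₁ w₀ := by
        intro v hv
        rcases Finset.mem_union.1 hv with hvN | hvW
        · obtain ⟨w, hw, hadj⟩ := (Finset.mem_filter.1 hvN).2
          rw [← hkey v hvN w hw hadj]
          exact hWconst w hw
        · exact hWconst v hvW
      have hsum1 : n * q₁ w₀ = 1 := by
        have h1 : ∑ v ∈ S, q₁ v = ∑ v, q₁ v :=
          Finset.sum_subset (Finset.subset_univ S) (fun v _ hv => hs₁ v hv)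
        rw [hq₁.2.1] at h1
        rw [Finset.sum_congr rfl (fun v hv => hSconst v hv), Finset.sum_const,
          nsmul_eq_mul] at h1
        exact h1
      have hval : q₁ w₀ = n⁻¹ := eq_inv_of_mul_eq_one_right hsum1
      funext v
      by_cases hv : v ∈ S
      · rw [hSconst v hv, hval, hpval v hv]
      · rw [hs₁ v hv, hpval' v hv]
    have hq' : q = uniformOn S :=
      toUniform q hq (fun v hv => (hsupp v hv).1)
        (key q r a b ha hb hq hr habq)
    have hr' : r = uniformOn S := by
      refine toUniform r hr (fun v hv => (hsupp v hv).2) ?_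
      refine key r q b a hb ha hr hq ?_
      rw [← habq]; ring
    exact hq'
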